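/- arXiv:1908.06200 — 2 statements merged into one kernel-verified Lean document; each statement's English description precedes it below -/
import Mathlib

section
/- Let X be a continuum that is colocally connected at p ∈ X. Then HS(p,X) is colocally connected: for every point z ∈ HS(p,X) and open set U containing z, there is an open set V with z ∈ V ⊆ U and HS(p,X) \ V connected. -/
open TopologicalSpace Set

/-- The hyperspace of subcontinua of `X`. -/
abbrev Hyp (X : Type*) [MetricSpace X] : Type _ :=
  {A : NonemptyCompacts X // IsConnected (A : Set X)}

variable {X : Type*} [MetricSpace X]

/-- `C(p,X)`, the subcontinua containing `p`, as a subset of `Hyp X`. -/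
def CpSet (p : X) : Set (Hyp X) := {A | p ∈ (A.1 : Set X)}

/-- The setoid collapsing `C(p,X)` to a point. -/
def hsSetoid (p : X) : Setoid (Hyp X) where
  r A B := A = B ∨ (A ∈ CpSet p ∧ B ∈ CpSet p)
  iseqv := by
    constructor
    · intro A; exact Or.inl rfl
    · rintro A B (rfl | h); exacts [Or.inl rfl, Or.inr ⟨h.2, h.1⟩]
    · rintro A B C (rfl | h) (rfl | h')
      exacts [Or.inl rfl, Or.inr h', Or.inr h, Or.inr ⟨h.1, h'.2⟩]

/-- The hyperspace `HS(p,X) = C(X)/C(p,X)`. -/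
abbrev HS (p : X) : Type _ := Quotient (hsSetoid p)

/-- The quotient map `π_p^X`. -/
def hsMk (p : X) : Hyp X → HS p := Quotient.mk (hsSetoid p)

/-- The singleton `{p}` as a subcontinuum. -/
def singHyp (p : X) : Hyp X :=
  ⟨⟨⟨{p}, isCompact_singleton⟩, Set.singleton_nonempty p⟩, isConnected_singleton⟩

/-- The distinguished point `C_p^X` of `HS(p,X)`. -/
def CpPoint (p : X) : HS p := hsMk p (singHyp p)


section P1
open Metric
variable {X : Type*} [MetricSpace X]

lemma hedist_ne_top (A B : NonemptyCompacts X) :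
    EMetric.hausdorffEdist (A : Set X) (B : Set X) ≠ ⊤ :=
  hausdorffEdist_ne_top_of_nonempty_of_bounded A.nonempty B.nonempty
    A.isCompact.isBounded B.isCompact.isBounded

/-- `{K | K ∩ W ≠ ∅}` is open for `W` open. -/
lemma isOpen_hit (W : Set X) (hW : IsOpen W) :
    IsOpen {K : NonemptyCompacts X | ((K : Set X) ∩ W).Nonempty} := by
  rw [Metric.isOpen_iff]
  rintro K ⟨x, hxK, hxW⟩
  obtain ⟨ε, εpos, hball⟩ := Metric.isOpen_iff.1 hW x hxW
  refine ⟨ε, εpos, fun K' hK' => ?_⟩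
  rw [mem_ball, NonemptyCompacts.dist_eq] at hK'
  obtain ⟨y, hyK', hy⟩ := exists_dist_lt_of_hausdorffDist_lt' hxK hK' (hedist_ne_top K' K)
  exact ⟨y, hyK', hball (mem_ball.2 hy)⟩

/-- `{K | K ⊆ C}` is closed for `C` closed. -/
lemma isClosed_below (C : Set X) (hC : IsClosed C) :
    IsClosed {K : NonemptyCompacts X | (K : Set X) ⊆ C} := by
  have : {K : NonemptyCompacts X | (K : Set X) ⊆ C}
      = {K : NonemptyCompacts X | ((K : Set X) ∩ Cᶜ).Nonempty}ᶜ := by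
    ext K
    simp [Set.not_nonempty_iff_eq_empty, ← Set.disjoint_iff_inter_eq_empty,
      Set.disjoint_compl_right_iff_subset]
  rw [this]
  exact (isOpen_hit _ hC.isOpen_compl).isClosed_compl

/-- `{K | K ⊆ W}` is open for `W` open. -/
lemma isOpen_below (W : Set X) (hW : IsOpen W) :
    IsOpen {K : NonemptyCompacts X | (K : Set X) ⊆ W} := by
  rw [Metric.isOpen_iff]
  intro K hK
  obtain ⟨δ, δpos, hδ⟩ := K.isCompact.exists_thickening_subset_open hW hK
  refine ⟨δ, δpos, fun K' hK' => ?_⟩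
  rw [mem_ball, NonemptyCompacts.dist_eq] at hK'
  intro x hx
  obtain ⟨y, hyK, hy⟩ := exists_dist_lt_of_hausdorffDist_lt hx hK' (hedist_ne_top K' K)
  exact hδ (mem_thickening_iff.2 ⟨y, hyK, hy⟩)

/-- `{K | C ⊆ K}` is closed. -/
lemma isClosed_above (C : Set X) :
    IsClosed {K : NonemptyCompacts X | C ⊆ (K : Set X)} := by
  refine isClosed_of_closure_subset fun K hK => ?_
  intro x hx
  have : ∀ ε > 0, ∃ y ∈ (K : Set X), dist x y < ε := by
    intro ε εpos
    obtain ⟨K', hK', hd⟩ := Metric.mem_closure_iff.1 hK ε εpos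
    rw [NonemptyCompacts.dist_eq, hausdorffDist_comm] at hd
    exact (exists_dist_lt_of_hausdorffDist_lt (hK' hx) hd (hedist_ne_top K' K))
  have : x ∈ closure (K : Set X) := Metric.mem_closure_iff.2 this
  rwa [K.isCompact.isClosed.closure_eq] at this

/-- limits of connected nonempty compacts are connected. -/
lemma isClosed_connected :
    IsClosed {K : NonemptyCompacts X | IsConnected (K : Set X)} := by
  refine isClosed_of_closure_subset fun K hK => ?_
  refine ⟨K.nonempty, ?_⟩
  by_contra hnc
  rw [IsPreconnected] at hnc
  push_neg at hnc
  obtain ⟨U, V, hU, hV, hcov, ⟨u, huK, huU⟩, ⟨v, hvK, hvV⟩, hdisj'⟩ := hnc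
  have hdisj : ∀ x, x ∈ (K : Set X) → x ∈ U → x ∈ V → False := by
    intro x h1 h2 h3
    have : x ∈ (K : Set X) ∩ (U ∩ V) := ⟨h1, h2, h3⟩
    rw [hdisj'] at this
    exact this
  -- A, B : the two pieces
  set A : Set X := (K : Set X) \ V with hA
  set B : Set X := (K : Set X) \ U with hB
  have hAK : A ⊆ (K : Set X) := diff_subset
  have hBK : B ⊆ (K : Set X) := diff_subset
  have hAc : IsCompact A := K.isCompact.diff hV
  have hBc : IsCompact B := K.isCompact.diff hU
  have hAne : A.Nonempty := ⟨u, huK, fun hv => hdisj u huK huU hv⟩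
  have hBne : B.Nonempty := ⟨v, hvK, fun hu => hdisj v hvK hu hvV⟩
  have hABdisj : Disjoint A B := by
    rw [Set.disjoint_iff_inter_eq_empty]
    ext x; simp only [mem_inter_iff, mem_empty_iff_false, iff_false]
    rintro ⟨⟨hxK, hxV⟩, ⟨_, hxU⟩⟩
    rcases hcov hxK with h | h
    exacts [hxU h, hxV h]
  have hABcover : (K : Set X) ⊆ A ∪ B := by
    intro x hxK
    by_cases hx : x ∈ U
    · exact Or.inl ⟨hxK, fun hxV => hdisj x hxK hx hxV⟩
    · exact Or.inr ⟨hxK, hx⟩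
  -- positive distance between A and B
  obtain ⟨a, haA, hamin⟩ := hAc.exists_isMinOn hAne (continuous_infDist_pt B).continuousOn
  set δ := infDist a B with hδdef
  have δpos : 0 < δ := (hBc.isClosed.notMem_iff_infDist_pos hBne).1
    (fun haB => Set.disjoint_left.1 hABdisj haA haB)
  have hfar : ∀ x ∈ A, ∀ y ∈ B, δ ≤ dist x y := by
    intro x hx y hy
    exact le_trans (hamin hx) (infDist_le_dist_of_mem hy)
  -- pick K' connected close to K
  obtain ⟨K', hK'conn, hd⟩ := Metric.mem_closure_iff.1 hK (δ/3) (by linarith)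
  rw [NonemptyCompacts.dist_eq] at hd
  set U' := {x | infDist x A < δ/3} with hU'
  set V' := {x | infDist x B < δ/3} with hV'
  have hU'open : IsOpen U' := isOpen_lt (continuous_infDist_pt A) continuous_const
  have hV'open : IsOpen V' := isOpen_lt (continuous_infDist_pt B) continuous_const
  have hd2 : hausdorffDist (K' : Set X) (K : Set X) < δ/3 := by
    rw [hausdorffDist_comm]; exact hd
  have hcov' : (K' : Set X) ⊆ U' ∪ V' := by
    intro x hx
    obtain ⟨y, hyK, hxy⟩ := exists_dist_lt_of_hausdorffDist_lt hx hd2 (hedist_ne_top K' K)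
    rcases hABcover hyK with h | h
    · exact Or.inl (lt_of_le_of_lt (infDist_le_dist_of_mem h) hxy)
    · exact Or.inr (lt_of_le_of_lt (infDist_le_dist_of_mem h) hxy)
  have hU'ne : ((K' : Set X) ∩ U').Nonempty := by
    obtain ⟨x, hxK', hax⟩ := exists_dist_lt_of_hausdorffDist_lt (hAK haA) hd (hedist_ne_top K K')
    exact ⟨x, hxK', lt_of_le_of_lt (infDist_le_dist_of_mem haA) (by rwa [dist_comm])⟩
  have hV'ne : ((K' : Set X) ∩ V').Nonempty := by
    obtain ⟨b, hbB⟩ := hBne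
    obtain ⟨x, hxK', hbx⟩ := exists_dist_lt_of_hausdorffDist_lt (hBK hbB) hd (hedist_ne_top K K')
    exact ⟨x, hxK', lt_of_le_of_lt (infDist_le_dist_of_mem hbB) (by rwa [dist_comm])⟩
  have hdisj2 : ((K' : Set X) ∩ (U' ∩ V')).Nonempty → False := by
    rintro ⟨x, -, hxU', hxV'⟩
    obtain ⟨a', ha'A, hxa'⟩ := (infDist_lt_iff hAne).1 hxU'
    obtain ⟨b', hb'B, hxb'⟩ := (infDist_lt_iff hBne).1 hxV'
    have := hfar a' ha'A b' hb'B
    have : dist a' b' ≤ dist a' x + dist x b' := dist_triangle _ _ _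
    rw [dist_comm a' x] at this
    linarith [hfar a' ha'A b' hb'B]
  exact hdisj2 (hK'conn.2 U' V' hU'open hV'open hcov' hU'ne hV'ne)

example : True := trivial

end P1

section Chains
open Metric
variable {X : Type*} [MetricSpace X] [CompactSpace X]

instance hypCompactSpace : CompactSpace (Hyp X) :=
  isCompact_iff_compactSpace.1 ((isClosed_connected (X := X)).isCompact)

/-- order on subcontinua -/
abbrev hsub (A B : Hyp X) : Prop := (A.1 : Set X) ⊆ (B.1 : Set X)

lemma hsub_total {𝒬 : Set (Hyp X)} (hch : IsChain hsub 𝒬) {A B : Hyp X}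
    (hA : A ∈ 𝒬) (hB : B ∈ 𝒬) : hsub A B ∨ hsub B A := by
  by_cases h : A = B
  · subst h; exact Or.inl subset_rfl
  · exact hch hA hB h

lemma chainInter_isConnected {𝒬 : Set (Hyp X)} (hch : IsChain hsub 𝒬) (hne : 𝒬.Nonempty) :
    IsConnected (⋂ C ∈ 𝒬, ((C : Hyp X).1 : Set X)) := by
  haveI : Nonempty ↥𝒬 := hne.to_subtype
  set S := ⋂ C ∈ 𝒬, ((C : Hyp X).1 : Set X) with hS
  have hSeq : S = ⋂ C : ↥𝒬, (((C : Hyp X)).1 : Set X) := by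
    rw [hS, Set.biInter_eq_iInter]
  have hdir : Directed (· ⊇ ·) (fun C : ↥𝒬 => (((C : Hyp X)).1 : Set X)) := by
    intro C D
    rcases hsub_total hch C.2 D.2 with h | h
    · exact ⟨C, subset_rfl, h⟩
    · exact ⟨D, h, subset_rfl⟩
  have hSne : S.Nonempty := by
    rw [hSeq]
    exact IsCompact.nonempty_iInter_of_directed_nonempty_isCompact_isClosed _ hdir
      (fun C => (C : Hyp X).1.nonempty) (fun C => (C : Hyp X).1.isCompact)
      (fun C => (C : Hyp X).1.isCompact.isClosed)
  have hScl : IsClosed S := by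
    rw [hSeq]; exact isClosed_iInter fun C => (C : Hyp X).1.isCompact.isClosed
  refine ⟨hSne, ?_⟩
  by_contra hnc
  rw [IsPreconnected] at hnc
  push_neg at hnc
  obtain ⟨U, V, hU, hV, hcov, ⟨u, huS, huU⟩, ⟨v, hvS, hvV⟩, hdisj'⟩ := hnc
  have hdisj : ∀ x, x ∈ S → x ∈ U → x ∈ V → False := by
    intro x h1 h2 h3
    have : x ∈ S ∩ (U ∩ V) := ⟨h1, h2, h3⟩
    rw [hdisj'] at this
    exact this
  set A : Set X := S \ V with hA
  set B : Set X := S \ U with hB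
  have hAc : IsCompact A := (hScl.isCompact).diff hV
  have hBc : IsCompact B := (hScl.isCompact).diff hU
  have hAne : A.Nonempty := ⟨u, huS, fun hv => hdisj u huS huU hv⟩
  have hBne : B.Nonempty := ⟨v, hvS, fun hu => hdisj v hvS hu hvV⟩
  have hABdisj : Disjoint A B := by
    rw [Set.disjoint_iff_inter_eq_empty]
    ext x; simp only [Set.mem_inter_iff, Set.mem_empty_iff_false, iff_false]
    rintro ⟨⟨hxS, hxV⟩, ⟨_, hxU⟩⟩
    rcases hcov hxS with h | h
    exacts [hxU h, hxV h]
  have hABcover : S ⊆ A ∪ B := by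
    intro x hxS
    by_cases hx : x ∈ U
    · exact Or.inl ⟨hxS, fun hxV => hdisj x hxS hx hxV⟩
    · exact Or.inr ⟨hxS, hx⟩
  obtain ⟨a, haA, hamin⟩ := hAc.exists_isMinOn hAne (continuous_infDist_pt B).continuousOn
  set δ := infDist a B with hδdef
  have δpos : 0 < δ := (hBc.isClosed.notMem_iff_infDist_pos hBne).1
    (fun haB => Set.disjoint_left.1 hABdisj haA haB)
  set U' := {x : X | infDist x A < δ/3} with hU'def
  set V' := {x : X | infDist x B < δ/3} with hV'def
  have hU'open : IsOpen U' := isOpen_lt (continuous_infDist_pt A) continuous_const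
  have hV'open : IsOpen V' := isOpen_lt (continuous_infDist_pt B) continuous_const
  have hU'V' : U' ∩ V' = ∅ := by
    ext x; simp only [Set.mem_inter_iff, Set.mem_empty_iff_false, iff_false]
    rintro ⟨hxU', hxV'⟩
    obtain ⟨a', ha'A, hxa'⟩ := (infDist_lt_iff hAne).1 hxU'
    obtain ⟨b', hb'B, hxb'⟩ := (infDist_lt_iff hBne).1 hxV'
    have h1 : δ ≤ dist a' b' := le_trans (hamin ha'A) (infDist_le_dist_of_mem hb'B)
    have h2 : dist a' b' ≤ dist a' x + dist x b' := dist_triangle _ _ _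
    rw [dist_comm a' x] at h2
    linarith
  -- some element of the chain is inside U' ∪ V'
  have : ∃ C : ↥𝒬, (((C : Hyp X)).1 : Set X) ⊆ U' ∪ V' := by
    by_contra hcon
    push_neg at hcon
    have hKne : ∀ C : ↥𝒬, ((((C : Hyp X)).1 : Set X) \ (U' ∪ V')).Nonempty := by
      intro C
      rcases Set.not_subset.1 (hcon C) with ⟨x, hx1, hx2⟩
      exact ⟨x, hx1, hx2⟩
    have hdir2 : Directed (· ⊇ ·) (fun C : ↥𝒬 => ((((C : Hyp X)).1 : Set X) \ (U' ∪ V'))) := by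
      intro C D
      rcases hdir C D with ⟨E, h1, h2⟩
      exact ⟨E, Set.diff_subset_diff_left h1, Set.diff_subset_diff_left h2⟩
    have hKc : ∀ C : ↥𝒬, IsCompact ((((C : Hyp X)).1 : Set X) \ (U' ∪ V')) :=
      fun C => (C : Hyp X).1.isCompact.diff (hU'open.union hV'open)
    have hnon := IsCompact.nonempty_iInter_of_directed_nonempty_isCompact_isClosed _ hdir2
      hKne hKc (fun C => (hKc C).isClosed)
    obtain ⟨x, hx⟩ := hnon
    rw [Set.mem_iInter] at hx
    have hxS : x ∈ S := by
      rw [hSeq, Set.mem_iInter]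
      exact fun C => (hx C).1
    have : x ∈ A ∪ B := hABcover hxS
    rcases this with h | h
    · exact (hx (Classical.arbitrary _)).2 (Or.inl (by
        simp only [hU'def, Set.mem_setOf_eq]
        exact lt_of_le_of_lt (infDist_le_dist_of_mem h) (by simpa using (by positivity : (0:ℝ) < δ/3))))
    · exact (hx (Classical.arbitrary _)).2 (Or.inr (by
        simp only [hV'def, Set.mem_setOf_eq]
        exact lt_of_le_of_lt (infDist_le_dist_of_mem h) (by simpa using (by positivity : (0:ℝ) < δ/3))))
  obtain ⟨C, hC⟩ := this
  have hconn := (C : Hyp X).2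
  have hCU' : (((C : Hyp X).1 : Set X) ∩ U').Nonempty := by
    refine ⟨a, ?_, ?_⟩
    · have : S ⊆ ((C : Hyp X).1 : Set X) := by
        rw [hSeq]; exact Set.iInter_subset _ C
      exact this haA.1
    · simp only [hU'def, Set.mem_setOf_eq]
      rw [← hδdef] at *
      calc infDist a A ≤ dist a a := infDist_le_dist_of_mem haA
        _ = 0 := by simp
        _ < δ/3 := by linarith
  have hCV' : (((C : Hyp X).1 : Set X) ∩ V').Nonempty := by
    obtain ⟨b, hbB⟩ := hBne
    refine ⟨b, ?_, ?_⟩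
    · have : S ⊆ ((C : Hyp X).1 : Set X) := by
        rw [hSeq]; exact Set.iInter_subset _ C
      exact this hbB.1
    · simp only [hV'def, Set.mem_setOf_eq]
      calc infDist b B ≤ dist b b := infDist_le_dist_of_mem hbB
        _ = 0 := by simp
        _ < δ/3 := by linarith
  have := hconn.2 U' V' hU'open hV'open hC hCU' hCV'
  rw [Set.inter_comm] at hU'V'
  obtain ⟨x, hx1, hx2⟩ := this
  have : x ∈ U' ∩ V' := hx2
  rw [show U' ∩ V' = ∅ from by rw [Set.inter_comm]; exact hU'V'] at this
  exact this

end Chains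

section Chains2
open Metric
variable {X : Type*} [MetricSpace X] [CompactSpace X]

lemma chainUnion_isConnected {𝒯 : Set (Hyp X)} (hch : IsChain hsub 𝒯) (hne : 𝒯.Nonempty) :
    IsConnected (closure (⋃ C ∈ 𝒯, ((C : Hyp X).1 : Set X))) := by
  obtain ⟨C₀, hC₀⟩ := hne
  have h1 : IsPreconnected (⋃ C ∈ 𝒯, ((C : Hyp X).1 : Set X)) := by
    have heq : (⋃ C ∈ 𝒯, ((C : Hyp X).1 : Set X))
        = ⋃₀ ((fun C : Hyp X => (C.1 : Set X)) '' 𝒯) := by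
      rw [Set.sUnion_image]
    rw [heq]
    refine IsPreconnected.sUnion_directed ?_ ?_
    · rintro _ ⟨C, hC, rfl⟩ _ ⟨D, hD, rfl⟩
      rcases hsub_total hch hC hD with h | h
      · exact ⟨(D.1 : Set X), ⟨D, hD, rfl⟩, h, subset_rfl⟩
      · exact ⟨(C.1 : Set X), ⟨C, hC, rfl⟩, subset_rfl, h⟩
    · rintro _ ⟨C, hC, rfl⟩
      exact C.2.2
  refine ⟨?_, h1.closure⟩
  exact (C₀.1.nonempty.mono (Set.subset_biUnion_of_mem hC₀)).mono subset_closure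

/-- approximation of the union-closure by elements of the chain -/
lemma chainUnion_approx {𝒯 : Set (Hyp X)} (hch : IsChain hsub 𝒯) (hne : 𝒯.Nonempty)
    {D : Set X} (hD : D = closure (⋃ C ∈ 𝒯, ((C : Hyp X).1 : Set X)))
    {ε : ℝ} (hε : 0 < ε) :
    ∃ C ∈ 𝒯, hausdorffDist ((C : Hyp X).1 : Set X) D < ε := by
  have hDc : IsCompact D := by
    rw [hD]; exact isClosed_closure.isCompact
  have hDne : D.Nonempty := by
    obtain ⟨C₀, hC₀⟩ := hne
    rw [hD]
    exact (C₀.1.nonempty.mono (Set.subset_biUnion_of_mem hC₀)).mono subset_closure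
  have hcover : D ⊆ ⋃ C ∈ 𝒯, {x : X | infDist x ((C : Hyp X).1 : Set X) < ε/2} := by
    intro x hx
    rw [hD] at hx
    obtain ⟨y, hy, hxy⟩ := Metric.mem_closure_iff.1 hx (ε/2) (by linarith)
    rw [Set.mem_iUnion₂] at hy ⊢
    obtain ⟨C, hC, hyC⟩ := hy
    exact ⟨C, hC, lt_of_le_of_lt (infDist_le_dist_of_mem hyC) hxy⟩
  obtain ⟨t, htsub, htfin, htcov⟩ := hDc.elim_finite_subcover_image
    (fun C _ => isOpen_lt (continuous_infDist_pt _) continuous_const) hcover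
  by_cases hte : t.Nonempty
  · obtain ⟨M, hMt, hMmax⟩ := (Set.finite_coe_iff.1 htfin).exists_maximalFor (fun C : Hyp X => (C.1 : Set X)) t hte
    have hMtop : ∀ C ∈ t, ((C : Hyp X).1 : Set X) ⊆ (M.1 : Set X) := by
      intro C hC
      rcases hsub_total hch (htsub hC) (htsub hMt) with h | h
      · exact h
      · exact hMmax hC h
    refine ⟨M, htsub hMt, lt_of_le_of_lt (hausdorffDist_le_of_infDist (by linarith) ?_ ?_)
      (by linarith : ε/2 < ε)⟩
    · intro x hx
      have hxD : x ∈ D := by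
        rw [hD]
        exact subset_closure (Set.subset_biUnion_of_mem (htsub hMt) hx)
      calc infDist x D ≤ dist x x := infDist_le_dist_of_mem hxD
        _ = 0 := by simp
        _ ≤ ε/2 := by linarith
    · intro x hx
      obtain ⟨C, hC, hxC⟩ := Set.mem_iUnion₂.1 (htcov hx)
      have h1 : infDist x (M.1 : Set X) ≤ infDist x ((C : Hyp X).1 : Set X) :=
        infDist_le_infDist_of_subset (hMtop C hC) C.1.nonempty
      exact le_trans h1 (le_of_lt hxC)
  · exfalso
    obtain ⟨x, hx⟩ := hDne
    have := htcov hx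
    rw [Set.not_nonempty_iff_eq_empty] at hte
    simp [hte] at this

/-- approximation of the chain intersection by elements of the chain -/
lemma chainInter_approx {𝒬 : Set (Hyp X)} (hch : IsChain hsub 𝒬) (hne : 𝒬.Nonempty)
    {E : Set X} (hE : E = ⋂ C ∈ 𝒬, ((C : Hyp X).1 : Set X))
    {ε : ℝ} (hε : 0 < ε) :
    ∃ C ∈ 𝒬, hausdorffDist ((C : Hyp X).1 : Set X) E < ε := by
  haveI : Nonempty ↥𝒬 := hne.to_subtype
  have hEconn := chainInter_isConnected hch hne
  rw [← hE] at hEconn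
  have hEne : E.Nonempty := hEconn.1
  have hEsub : ∀ C ∈ 𝒬, E ⊆ ((C : Hyp X).1 : Set X) := by
    intro C hC
    rw [hE]
    exact Set.biInter_subset_of_mem hC
  -- the sets C \ (ε/2-neighborhood of E) form a directed family of compacts
  by_cases hex : ∃ C ∈ 𝒬, ∀ x ∈ ((C : Hyp X).1 : Set X), infDist x E < ε/2
  · obtain ⟨C, hC, hCnear⟩ := hex
    refine ⟨C, hC, lt_of_le_of_lt (hausdorffDist_le_of_infDist (by linarith) ?_ ?_)
      (by linarith : ε/2 < ε)⟩
    · intro x hx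
      exact le_of_lt (hCnear x hx)
    · intro x hx
      calc infDist x ((C : Hyp X).1 : Set X) ≤ dist x x :=
            infDist_le_dist_of_mem (hEsub C hC hx)
        _ = 0 := by simp
        _ ≤ ε/2 := by linarith
  · exfalso
    push_neg at hex
    have hKne : ∀ C : ↥𝒬, ((((C : Hyp X)).1 : Set X) ∩ {x | ε/2 ≤ infDist x E}).Nonempty := by
      rintro ⟨C, hC⟩
      obtain ⟨x, hx1, hx2⟩ := hex C hC
      exact ⟨x, hx1, hx2⟩
    have hdir : Directed (· ⊇ ·)
        (fun C : ↥𝒬 => ((((C : Hyp X)).1 : Set X) ∩ {x | ε/2 ≤ infDist x E})) := by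
      intro C D
      rcases hsub_total hch C.2 D.2 with h | h
      · exact ⟨C, subset_rfl, Set.inter_subset_inter_left _ h⟩
      · exact ⟨D, Set.inter_subset_inter_left _ h, subset_rfl⟩
    have hKcl : ∀ C : ↥𝒬, IsClosed ((((C : Hyp X)).1 : Set X) ∩ {x | ε/2 ≤ infDist x E}) :=
      fun C => (C : Hyp X).1.isCompact.isClosed.inter
        (isClosed_le continuous_const (continuous_infDist_pt E))
    have hnon := IsCompact.nonempty_iInter_of_directed_nonempty_isCompact_isClosed _ hdir hKne
      (fun C => (C : Hyp X).1.isCompact.inter_right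
        (isClosed_le continuous_const (continuous_infDist_pt E)))
      hKcl
    obtain ⟨x, hx⟩ := hnon
    rw [Set.mem_iInter] at hx
    have hxE : x ∈ E := by
      rw [hE, Set.mem_iInter₂]
      intro C hC
      exact (hx ⟨C, hC⟩).1
    have : ε/2 ≤ infDist x E := (hx (Classical.arbitrary _)).2
    rw [infDist_zero_of_mem hxE] at this
    linarith

end Chains2

section Gap
open Metric
variable {Y : Type*} [MetricSpace Y] [CompactSpace Y] [ConnectedSpace Y]

/-- Boundary-bumping style lemma: a proper closed connected subset of a connected compact
metric space is properly contained in a proper subcontinuum-enlargement. -/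
lemma gap_in_space {D : Set Y} (hDcl : IsClosed D) (hDconn : IsConnected D)
    (hproper : D ≠ Set.univ) :
    ∃ K : Set Y, IsCompact K ∧ IsConnected K ∧ D ⊆ K ∧ K ≠ D ∧ K ≠ Set.univ := by
  obtain ⟨e, -, he⟩ := Set.exists_of_ssubset (hproper.lt_of_le (Set.subset_univ D))
  obtain ⟨d₀, hd₀⟩ := hDconn.1
  set δ := infDist e D with hδ
  have δpos : 0 < δ := (hDcl.notMem_iff_infDist_pos hDconn.1).1 he
  set U := {y : Y | infDist y D < δ/2} with hU
  have hUopen : IsOpen U := isOpen_lt (continuous_infDist_pt D) continuous_const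
  have hDU : D ⊆ U := fun y hy => by
    simp only [hU, Set.mem_setOf_eq, infDist_zero_of_mem hy]; linarith
  set F := closure U with hF
  have hUF : U ⊆ F := subset_closure
  have hFcl : IsClosed F := isClosed_closure
  have hFdist : ∀ y ∈ F, infDist y D ≤ δ/2 := by
    intro y hy
    have : F ⊆ {y : Y | infDist y D ≤ δ/2} :=
      closure_minimal (fun z hz => show infDist z D ≤ δ/2 from le_of_lt hz)
        (isClosed_le (continuous_infDist_pt D) continuous_const)
    exact this hy
  have heF : e ∉ F := fun hh => by
    have := hFdist e hh; rw [← hδ] at this; linarith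
  set K := connectedComponentIn F d₀ with hK
  have hd₀F : d₀ ∈ F := hUF (hDU hd₀)
  have hDK : D ⊆ K := hDconn.2.subset_connectedComponentIn hd₀ (hDU.trans hUF)
  have hKF : K ⊆ F := connectedComponentIn_subset F d₀
  have hKconn : IsConnected K := isConnected_connectedComponentIn_iff.2 hd₀F
  have hKcomp : IsCompact K := by
    rw [hK, connectedComponentIn_eq_image hd₀F]
    haveI : CompactSpace ↥F := isCompact_iff_compactSpace.1 hFcl.isCompact
    exact (isClosed_connectedComponent.isCompact).image continuous_subtype_val
  refine ⟨K, hKcomp, hKconn, hDK, ?_, ?_⟩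
  · -- K ≠ D : K must reach outside U
    have hKU : ¬ K ⊆ U := by
      intro hKU
      -- work in the compact space ↥F
      haveI : CompactSpace ↥F := isCompact_iff_compactSpace.1 hFcl.isCompact
      set x₀ : ↥F := ⟨d₀, hd₀F⟩ with hx₀
      have hcomp : Subtype.val '' connectedComponent x₀ = K :=
        (connectedComponentIn_eq_image hd₀F).symm
      set V : Set ↥F := Subtype.val ⁻¹' U with hV
      have hVopen : IsOpen V := continuous_subtype_val.isOpen_preimage U hUopen
      have hCCV : connectedComponent x₀ ⊆ V := by
        intro z hz
        have : (z : Y) ∈ K := by rw [← hcomp]; exact ⟨z, hz, rfl⟩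
        exact hKU this
      -- find a single clopen set between the component and V
      have hiInter := connectedComponent_eq_iInter_isClopen x₀
      have hVc : IsCompact (Vᶜ : Set ↥F) := hVopen.isClosed_compl.isCompact
      have hempty : (Vᶜ ∩ ⋂ Z : {Z : Set ↥F // IsClopen Z ∧ x₀ ∈ Z}, (Z : Set ↥F)) = ∅ := by
        rw [← hiInter]
        rw [Set.eq_empty_iff_forall_notMem]
        rintro z ⟨hz1, hz2⟩
        exact hz1 (hCCV hz2)
      obtain ⟨t, ht⟩ := hVc.elim_finite_subfamily_closed _
        (fun Z => Z.2.1.1) hempty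
      set Zc : Set ↥F := ⋂ Z ∈ t, (Z : Set ↥F) with hZc
      have hZcclopen : IsClopen Zc := by
        rw [hZc]
        exact isClopen_biInter_finset (fun Z _ => Z.2.1)
      have hx₀Zc : x₀ ∈ Zc := by
        rw [hZc, Set.mem_iInter₂]
        exact fun Z _ => Z.2.2
      have hZcV : Zc ⊆ V := by
        intro z hz
        by_contra hzV
        have : z ∈ Vᶜ ∩ ⋂ Z ∈ t, (Z : Set ↥F) := ⟨hzV, hz⟩
        rw [ht] at this
        exact this
      -- transfer to a clopen subset of Y
      obtain ⟨G₁, hG₁open, hG₁⟩ := isOpen_induced_iff.1 hZcclopen.2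
      set Fs : Set Y := Subtype.val '' Zc with hFs
      have hFsU : Fs ⊆ U := by
        rintro _ ⟨z, hz, rfl⟩
        exact hZcV hz
      have hFsG₁ : Fs = U ∩ G₁ := by
        apply Set.Subset.antisymm
        · rintro _ ⟨z, hz, rfl⟩
          refine ⟨hZcV hz, ?_⟩
          rw [← hG₁] at hz
          exact hz
        · rintro y ⟨hyU, hyG₁⟩
          exact ⟨⟨y, hUF hyU⟩, by rw [← hG₁]; exact hyG₁, rfl⟩
      have hFsopen : IsOpen Fs := hFsG₁ ▸ hUopen.inter hG₁open
      have hFsclosed : IsClosed Fs := by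
        have : IsCompact Fs := (hZcclopen.1.isCompact).image continuous_subtype_val
        exact this.isClosed
      have : Fs = ∅ ∨ Fs = Set.univ := isClopen_iff.1 ⟨hFsclosed, hFsopen⟩
      rcases this with h | h
      · rw [Set.eq_empty_iff_forall_notMem] at h
        exact h d₀ ⟨x₀, hx₀Zc, rfl⟩
      · have : e ∈ Fs := h ▸ Set.mem_univ e
        exact heF (hUF (hFsU this))
    obtain ⟨x, hxK, hxU⟩ := Set.not_subset.1 hKU
    intro hKD
    rw [hKD] at hxK
    exact hxU (hDU hxK)
  · intro hKuniv
    rw [hKuniv] at hKF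
    exact heF (hKF (Set.mem_univ e))

end Gap

section Transfer
open Metric Topology
variable {X : Type*} [MetricSpace X] [CompactSpace X]

lemma hyp_ext {C D : Hyp X} (h : (C.1 : Set X) = (D.1 : Set X)) : C = D :=
  Subtype.ext (NonemptyCompacts.ext h)

lemma hyp_dist_eq (C D : Hyp X) :
    dist C D = hausdorffDist (C.1 : Set X) (D.1 : Set X) := by
  rw [Subtype.dist_eq, NonemptyCompacts.dist_eq]

/-- the gap lemma for subcontinua -/
lemma hyp_gap {D E : Hyp X} (hDE : hsub D E) (hne : (D.1 : Set X) ≠ (E.1 : Set X)) :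
    ∃ G : Hyp X, hsub D G ∧ hsub G E ∧ (G.1 : Set X) ≠ (D.1 : Set X) ∧
      (G.1 : Set X) ≠ (E.1 : Set X) := by
  haveI : CompactSpace ↥(E.1 : Set X) := isCompact_iff_compactSpace.1 E.1.isCompact
  haveI : ConnectedSpace ↥(E.1 : Set X) := Subtype.connectedSpace E.2
  set D' : Set ↥(E.1 : Set X) := Subtype.val ⁻¹' (D.1 : Set X) with hD'
  have himage : Subtype.val '' D' = (D.1 : Set X) := by
    rw [hD', Subtype.image_preimage_coe, Set.inter_eq_right.2 hDE]
  have hD'cl : IsClosed D' := D.1.isCompact.isClosed.preimage continuous_subtype_val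
  have hD'conn : IsConnected D' := by
    have h2 : IsPreconnected D' := by
      rw [← IsInducing.subtypeVal.isPreconnected_image, himage]
      exact D.2.2
    obtain ⟨d, hd⟩ := D.1.nonempty
    exact ⟨⟨⟨d, hDE hd⟩, by simpa [hD']⟩, h2⟩
  have hD'proper : D' ≠ Set.univ := by
    intro hcon
    apply hne
    rw [← himage, hcon, Set.image_univ, Subtype.range_val]
  obtain ⟨K, hKcomp, hKconn, hD'K, hKne, hKuniv⟩ := gap_in_space hD'cl hD'conn hD'proper
  set G₀ : Set X := Subtype.val '' K with hG₀
  have hG₀comp : IsCompact G₀ := hKcomp.image continuous_subtype_val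
  have hG₀conn : IsConnected G₀ := by
    refine ⟨hKconn.1.image _, ?_⟩
    rw [hG₀, IsInducing.subtypeVal.isPreconnected_image]
    exact hKconn.2
  refine ⟨⟨⟨⟨G₀, hG₀comp⟩, hG₀conn.1⟩, hG₀conn⟩, ?_, ?_, ?_, ?_⟩
  · show (D.1 : Set X) ⊆ G₀
    rw [← himage, hG₀]
    exact Set.image_mono hD'K
  · show G₀ ⊆ (E.1 : Set X)
    rw [hG₀]
    rintro _ ⟨z, _, rfl⟩
    exact z.2
  · show G₀ ≠ (D.1 : Set X)
    rw [hG₀, ← himage]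
    intro hcon
    exact hKne (Set.image_injective.2 Subtype.val_injective hcon)
  · show G₀ ≠ (E.1 : Set X)
    rw [hG₀]
    intro hcon
    apply hKuniv
    apply Set.image_injective.2 Subtype.val_injective
    rw [hcon, Set.image_univ, Subtype.range_val]

lemma isClosed_hsub_above (C : Hyp X) : IsClosed {E : Hyp X | hsub C E} := by
  have : {E : Hyp X | hsub C E}
      = Subtype.val ⁻¹' {K : NonemptyCompacts X | (C.1 : Set X) ⊆ (K : Set X)} := rfl
  rw [this]
  exact (isClosed_above _).preimage continuous_subtype_val

lemma isClosed_hsub_below (C : Hyp X) : IsClosed {E : Hyp X | hsub E C} := by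
  have : {E : Hyp X | hsub E C}
      = Subtype.val ⁻¹' {K : NonemptyCompacts X | (K : Set X) ⊆ (C.1 : Set X)} := rfl
  rw [this]
  exact (isClosed_below _ C.1.isCompact.isClosed).preimage continuous_subtype_val

end Transfer

section MaxChain
open Metric
variable {X : Type*} [MetricSpace X] [CompactSpace X]

/-- The key tool: an "order-arc-like" connected chain of subcontinua from `B` up to `Z`. -/
lemma exists_connected_chain (B Z : Hyp X) (hBZ : hsub B Z) :
    ∃ S : Set (Hyp X), IsConnected S ∧ B ∈ S ∧ Z ∈ S ∧ ∀ C ∈ S, hsub B C ∧ hsub C Z := by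
  classical
  set P : Set (Hyp X) := {C | hsub B C ∧ hsub C Z} with hP
  have hBP : B ∈ P := ⟨subset_rfl, hBZ⟩
  have hZP : Z ∈ P := ⟨hBZ, subset_rfl⟩
  have hchain0 : IsChain (fun C D : ↥P => hsub C.1 D.1)
      ({⟨B, hBP⟩, ⟨Z, hZP⟩} : Set ↥P) := by
    intro x hx y hy hne
    simp only [Set.mem_insert_iff, Set.mem_singleton_iff] at hx hy
    rcases hx with rfl | rfl <;> rcases hy with rfl | rfl
    · exact absurd rfl hne
    · exact Or.inl hBZ
    · exact Or.inr hBZ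
    · exact absurd rfl hne
  obtain ⟨M, hMmax, hM0⟩ := hchain0.exists_maxChain
  set S : Set (Hyp X) := Subtype.val '' M with hS
  have hBS : B ∈ S := ⟨⟨B, hBP⟩, hM0 (Set.mem_insert _ _), rfl⟩
  have hZS : Z ∈ S := ⟨⟨Z, hZP⟩, hM0 (Set.mem_insert_of_mem _ rfl), rfl⟩
  have hSP : S ⊆ P := by rintro _ ⟨C, _, rfl⟩; exact C.2
  have hchS : IsChain hsub S := by
    rintro _ ⟨C, hC, rfl⟩ _ ⟨D, hD, rfl⟩ hne
    exact hMmax.1 hC hD (fun h => hne (congrArg Subtype.val h))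
  have hmaxS : ∀ C : Hyp X, C ∈ P → (∀ D ∈ S, hsub C D ∨ hsub D C) → C ∈ S := by
    intro C hCP hcomp
    by_contra hCS
    have hCM : (⟨C, hCP⟩ : ↥P) ∉ M := fun h => hCS ⟨_, h, rfl⟩
    have hch' : IsChain (fun C D : ↥P => hsub C.1 D.1) (insert (⟨C, hCP⟩ : ↥P) M) :=
      hMmax.1.insert (fun D hD _ => hcomp D.1 ⟨D, hD, rfl⟩)
    have := hMmax.2 hch' (Set.subset_insert _ _)
    exact hCM (this ▸ Set.mem_insert _ _)
  have hPclosed : IsClosed P := by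
    have : P = {C : Hyp X | hsub B C} ∩ {C : Hyp X | hsub C Z} := rfl
    rw [this]
    exact (isClosed_hsub_above B).inter (isClosed_hsub_below Z)
  have hSclosed : IsClosed S := by
    refine isClosed_of_closure_subset fun Dl hDl => ?_
    have hDlP : Dl ∈ P := closure_minimal hSP hPclosed hDl
    refine hmaxS Dl hDlP fun C hC => ?_
    have hsplit : S ⊆ {E : Hyp X | hsub C E} ∪ {E : Hyp X | hsub E C} := by
      intro C' hC'
      by_cases heq : C' = C
      · subst heq; exact Or.inl (show hsub C' C' from subset_rfl)
      · rcases hchS hC' hC heq with h | h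
        · exact Or.inr h
        · exact Or.inl h
    have hclosedsplit : IsClosed ({E : Hyp X | hsub C E} ∪ {E : Hyp X | hsub E C}) :=
      (isClosed_hsub_above C).union (isClosed_hsub_below C)
    have := closure_minimal hsplit hclosedsplit hDl
    rcases this with h | h
    · exact Or.inr h
    · exact Or.inl h
  -- S is compact
  have hScomp : IsCompact S := hSclosed.isCompact
  -- S is connected
  have hSconn : IsConnected S := by
    refine ⟨⟨B, hBS⟩, ?_⟩
    by_contra hnc
    rw [IsPreconnected] at hnc
    push_neg at hnc
    obtain ⟨U, V, hU, hV, hcov, hSU, hSV, hdisj'⟩ := hnc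
    have hdisjP : ∀ C, C ∈ S → C ∈ U → C ∈ V → False := by
      intro C h1 h2 h3
      have : C ∈ S ∩ (U ∩ V) := ⟨h1, h2, h3⟩
      rw [hdisj'] at this
      exact this
    -- core argument, with B in the U side
    have core : ∀ U' V' : Set (Hyp X), IsOpen U' → IsOpen V' →
        S ⊆ U' ∪ V' → (∀ C, C ∈ S → C ∈ U' → C ∈ V' → False) →
        B ∈ U' → (S ∩ V').Nonempty → False := by
      clear hdisjP hcov hSU hSV hU hV hdisj'
      clear_value S
      intro U V hU hV hcov hdisjP hBU hSV
      set 𝒯 : Set (Hyp X) := {C | C ∈ S ∧ ∀ C' ∈ S, hsub C' C → C' ∈ U} with h𝒯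
      have hB𝒯 : B ∈ 𝒯 := by
        refine ⟨hBS, fun C' hC' hsubC'B => ?_⟩
        have : C' = B := hyp_ext (Set.Subset.antisymm hsubC'B (hSP hC').1)
        subst this
        exact hBU
      have h𝒯S : 𝒯 ⊆ S := fun C hC => hC.1
      have h𝒯ch : IsChain hsub 𝒯 := fun x hx y hy hne => hchS (h𝒯S hx) (h𝒯S hy) hne
      have h𝒯ne : 𝒯.Nonempty := ⟨B, hB𝒯⟩
      set D₀ : Set X := closure (⋃ C ∈ 𝒯, ((C : Hyp X).1 : Set X)) with hD₀
      have hD₀conn : IsConnected D₀ := chainUnion_isConnected h𝒯ch h𝒯ne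
      have hD₀comp : IsCompact D₀ := isClosed_closure.isCompact
      set Dh : Hyp X := ⟨⟨⟨D₀, hD₀comp⟩, hD₀conn.1⟩, hD₀conn⟩ with hDh
      have hDh1 : (Dh.1 : Set X) = D₀ := rfl
      have hsubCD : ∀ C ∈ 𝒯, hsub C Dh := by
        intro C hC
        show (C.1 : Set X) ⊆ (Dh.1 : Set X)
        rw [hDh1, hD₀]
        exact (Set.subset_biUnion_of_mem (u := fun C : Hyp X => ((C.1 : Set X))) hC).trans subset_closure
      have hDhP : Dh ∈ P := by
        constructor
        · exact hsubCD B hB𝒯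
        · show (Dh.1 : Set X) ⊆ (Z.1 : Set X)
          rw [hDh1, hD₀]
          exact closure_minimal (Set.iUnion₂_subset fun C hC => (hSP (h𝒯S hC)).2)
            Z.1.isCompact.isClosed
      have hDhcomp : ∀ C₀ ∈ S, hsub Dh C₀ ∨ hsub C₀ Dh := by
        intro C₀ hC₀
        by_cases hall : ∀ C ∈ 𝒯, hsub C C₀
        · left
          show (Dh.1 : Set X) ⊆ (C₀.1 : Set X)
          rw [hDh1, hD₀]
          exact closure_minimal (Set.iUnion₂_subset hall) C₀.1.isCompact.isClosed
        · right
          push_neg at hall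
          obtain ⟨C, hC, hnsub⟩ := hall
          have hne : C ≠ C₀ := fun h => hnsub (h ▸ subset_rfl)
          rcases hchS (h𝒯S hC) hC₀ hne with h | h
          · exact absurd h hnsub
          · exact h.trans (hsubCD C hC)
      have hDhS : Dh ∈ S := hmaxS Dh hDhP hDhcomp
      have h𝒯U : 𝒯 ⊆ S ∩ U := fun C hC => ⟨hC.1, hC.2 C hC.1 subset_rfl⟩
      have hSUclosed : IsClosed (S ∩ U) := by
        have : S ∩ U = S ∩ Vᶜ := by
          ext C
          constructor
          · rintro ⟨h1, h2⟩
            exact ⟨h1, fun h3 => hdisjP C h1 h2 h3⟩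
          · rintro ⟨h1, h2⟩
            rcases hcov h1 with h | h
            · exact ⟨h1, h⟩
            · exact absurd h h2
        rw [this]
        exact hSclosed.inter hV.isClosed_compl
      have hSVclosed : IsClosed (S ∩ V) := by
        have : S ∩ V = S ∩ Uᶜ := by
          ext C
          constructor
          · rintro ⟨h1, h2⟩
            exact ⟨h1, fun h3 => hdisjP C h1 h3 h2⟩
          · rintro ⟨h1, h2⟩
            rcases hcov h1 with h | h
            · exact absurd h h2
            · exact ⟨h1, h⟩
        rw [this]
        exact hSclosed.inter hU.isClosed_compl
      have hDhU : Dh ∈ S ∩ U := by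
        have hcl : Dh ∈ closure 𝒯 := by
          rw [Metric.mem_closure_iff]
          intro ε hε
          obtain ⟨C, hC, hH⟩ := chainUnion_approx h𝒯ch h𝒯ne rfl hε
          refine ⟨C, hC, ?_⟩
          rw [hyp_dist_eq, hDh1, hausdorffDist_comm]
          exact hH
        exact closure_minimal h𝒯U hSUclosed hcl
      have hDh𝒯 : Dh ∈ 𝒯 := by
        refine ⟨hDhS, fun C' hC' hsubC'Dh => ?_⟩
        by_cases hex : ∃ C ∈ 𝒯, hsub C' C
        · obtain ⟨C, hC, h⟩ := hex
          exact hC.2 C' hC' h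
        · push_neg at hex
          have hall : ∀ C ∈ 𝒯, hsub C C' := by
            intro C hC
            have hne : C' ≠ C := by
              rintro rfl
              exact hex C' hC subset_rfl
            rcases hchS hC' (h𝒯S hC) hne with h | h
            · exact absurd h (hex C hC)
            · exact h
          have : (Dh.1 : Set X) ⊆ (C'.1 : Set X) := by
            rw [hDh1, hD₀]
            exact closure_minimal (Set.iUnion₂_subset hall) C'.1.isCompact.isClosed
          have : C' = Dh := hyp_ext (Set.Subset.antisymm hsubC'Dh this)
          subst this
          exact hDhU.2
      -- the part of the chain strictly above Dh
      set 𝒬 : Set (Hyp X) :=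
        {C | C ∈ S ∧ hsub Dh C ∧ (C.1 : Set X) ≠ (Dh.1 : Set X)} with h𝒬
      have tricho : ∀ C₀ ∈ S, hsub C₀ Dh ∨ C₀ ∈ 𝒬 := by
        intro C₀ hC₀
        by_cases heq : C₀ = Dh
        · exact Or.inl (heq ▸ subset_rfl)
        · rcases hchS hC₀ hDhS heq with h | h
          · exact Or.inl h
          · exact Or.inr ⟨hC₀, h, fun hs => heq (hyp_ext hs)⟩
      have h𝒬S : 𝒬 ⊆ S := fun C hC => hC.1
      have h𝒬ch : IsChain hsub 𝒬 := fun x hx y hy hne => hchS (h𝒬S hx) (h𝒬S hy) hne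
      obtain ⟨C₂, hC₂S, hC₂V⟩ := hSV
      have hC₂Q : C₂ ∈ 𝒬 := by
        rcases tricho C₂ hC₂S with h | h
        · exact absurd (hDh𝒯.2 C₂ hC₂S h) (fun hC₂U => hdisjP C₂ hC₂S hC₂U hC₂V)
        · exact h
      have h𝒬ne : 𝒬.Nonempty := ⟨C₂, hC₂Q⟩
      set E₀ : Set X := ⋂ C ∈ 𝒬, ((C : Hyp X).1 : Set X) with hE₀
      have hE₀conn : IsConnected E₀ := chainInter_isConnected h𝒬ch h𝒬ne
      have hE₀comp : IsCompact E₀ := by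
        refine IsClosed.isCompact (isClosed_biInter fun C _ => C.1.isCompact.isClosed)
      set Eh : Hyp X := ⟨⟨⟨E₀, hE₀comp⟩, hE₀conn.1⟩, hE₀conn⟩ with hEh
      have hEh1 : (Eh.1 : Set X) = E₀ := rfl
      have hDE₀ : (Dh.1 : Set X) ⊆ E₀ :=
        Set.subset_iInter₂ fun C hC => hC.2.1
      have hEhP : Eh ∈ P := by
        constructor
        · exact hDhP.1.trans hDE₀
        · exact (Set.biInter_subset_of_mem hC₂Q).trans (hSP hC₂S).2
      have hEhcomp : ∀ C₀ ∈ S, hsub Eh C₀ ∨ hsub C₀ Eh := by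
        intro C₀ hC₀
        rcases tricho C₀ hC₀ with h | h
        · exact Or.inr (h.trans hDE₀)
        · exact Or.inl (Set.biInter_subset_of_mem h)
      have hEhS : Eh ∈ S := hmaxS Eh hEhP hEhcomp
      -- the "claim": elements of 𝒬 lying in U contain elements of 𝒬 lying in V
      have claim : ∀ C ∈ 𝒬, C ∈ U → ∃ C'', C'' ∈ 𝒬 ∧ C'' ∈ V ∧ hsub C'' C := by
        intro C hCQ hCU
        have hC𝒯 : C ∉ 𝒯 := by
          intro hC𝒯
          exact hCQ.2.2 (Set.Subset.antisymm (hsubCD C hC𝒯) hCQ.2.1)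
        rw [h𝒯] at hC𝒯
        simp only [Set.mem_setOf_eq, not_and, not_forall] at hC𝒯
        obtain ⟨C', hC'S, hsubC'C, hC'U⟩ := hC𝒯 hCQ.1
        have hC'V : C' ∈ V := by
          rcases hcov hC'S with h | h
          · exact absurd h hC'U
          · exact h
        refine ⟨C', ?_, hC'V, hsubC'C⟩
        rcases tricho C' hC'S with h | h
        · exact absurd (hDh𝒯.2 C' hC'S h) hC'U
        · exact h
      by_cases hDE : (Eh.1 : Set X) = (Dh.1 : Set X)
      · -- no gap: Dh is approximated from above by 𝒬 ∩ V, so Dh ∈ V: contradiction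
        set 𝒬₂ : Set (Hyp X) := {C | C ∈ 𝒬 ∧ C ∈ V} with h𝒬₂
        have h𝒬₂ne : 𝒬₂.Nonempty := ⟨C₂, hC₂Q, hC₂V⟩
        have h𝒬₂ch : IsChain hsub 𝒬₂ := fun x hx y hy hne =>
          hchS (h𝒬S hx.1) (h𝒬S hy.1) hne
        have hE₂ : (⋂ C ∈ 𝒬₂, ((C : Hyp X).1 : Set X)) = E₀ := by
          apply Set.Subset.antisymm
          · intro x hx
            rw [hE₀, Set.mem_iInter₂]
            intro C hCQ
            have hCS := h𝒬S hCQ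
            rcases hcov hCS with hCU | hCV
            · obtain ⟨C'', hC''Q, hC''V, hsubC''C⟩ := claim C hCQ hCU
              have : x ∈ (C''.1 : Set X) := by
                rw [Set.mem_iInter₂] at hx
                exact hx C'' ⟨hC''Q, hC''V⟩
              exact hsubC''C this
            · rw [Set.mem_iInter₂] at hx
              exact hx C ⟨hCQ, hCV⟩
          · exact Set.subset_iInter₂ fun C hC => Set.biInter_subset_of_mem hC.1
        have hEhcl : Eh ∈ closure 𝒬₂ := by
          rw [Metric.mem_closure_iff]
          intro ε hε
          obtain ⟨C, hC, hH⟩ := chainInter_approx h𝒬₂ch h𝒬₂ne (by rw [hE₂, ← hEh1]) hε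
          refine ⟨C, hC, ?_⟩
          rw [hyp_dist_eq, hausdorffDist_comm]
          exact hH
        have h𝒬₂SV : 𝒬₂ ⊆ S ∩ V := fun C hC => ⟨h𝒬S hC.1, hC.2⟩
        have hEhV : Eh ∈ S ∩ V := closure_minimal h𝒬₂SV hSVclosed hEhcl
        have : Eh = Dh := hyp_ext hDE
        rw [this] at hEhV
        exact hdisjP Dh hDhS hDhU.2 hEhV.2
      · -- gap case
        have hEhQ : Eh ∈ 𝒬 := ⟨hEhS, hDE₀, hDE⟩
        have hEhV : Eh ∈ V := by
          rcases hcov hEhS with hEhU | hEhV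
          · obtain ⟨C'', hC''Q, hC''V, hsubC''Eh⟩ := claim Eh hEhQ hEhU
            have : C'' = Eh :=
              hyp_ext (Set.Subset.antisymm hsubC''Eh (Set.biInter_subset_of_mem hC''Q))
            rw [this] at hC''V
            exact hC''V
          · exact hEhV
        obtain ⟨G, hG1, hG2, hG3, hG4⟩ := hyp_gap (show hsub Dh Eh from hDE₀)
          (fun h => hDE h.symm)
        have hGP : G ∈ P := ⟨hDhP.1.trans hG1, hG2.trans hEhP.2⟩
        have hGcomp : ∀ C₀ ∈ S, hsub G C₀ ∨ hsub C₀ G := by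
          intro C₀ hC₀
          rcases tricho C₀ hC₀ with h | h
          · exact Or.inr (h.trans hG1)
          · exact Or.inl (hG2.trans (Set.biInter_subset_of_mem h))
        have hGS : G ∈ S := hmaxS G hGP hGcomp
        have hGQ : G ∈ 𝒬 := ⟨hGS, hG1, hG3⟩
        exact hG4 (Set.Subset.antisymm hG2 (Set.biInter_subset_of_mem hGQ))
    rcases hcov hBS with hBU | hBV
    · exact core U V hU hV hcov hdisjP hBU hSV
    · refine core V U hV hU (fun C hC => (hcov hC).symm)
        (fun C h1 h2 h3 => hdisjP C h1 h3 h2) hBV hSU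
  exact ⟨S, hSconn, hBS, hZS, fun C hC => (hSP hC)⟩

end MaxChain

section QuotientGlue
open Metric
variable {X : Type*} [MetricSpace X] [CompactSpace X]

lemma continuous_hsMk (p : X) : Continuous (hsMk p) :=
  continuous_quotient_mk' (s := hsSetoid p)

lemma isOpen_hsMk_iff (p : X) (V : Set (HS p)) :
    IsOpen V ↔ IsOpen (hsMk p ⁻¹' V) :=
  ((isQuotientMap_quotient_mk' (s := hsSetoid p)).isOpen_preimage).symm

lemma hsMk_surj (p : X) (z : HS p) : ∃ A : Hyp X, hsMk p A = z :=
  ⟨z.out, Quotient.out_eq z⟩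

lemma hsMk_rel {p : X} {A B : Hyp X} (h : hsMk p A = hsMk p B) :
    A = B ∨ (A ∈ CpSet p ∧ B ∈ CpSet p) :=
  Quotient.exact h

lemma hsMk_eq_of_mem {p : X} {A B : Hyp X} (hA : A ∈ CpSet p) (hB : B ∈ CpSet p) :
    hsMk p A = hsMk p B :=
  Quotient.sound (Or.inr ⟨hA, hB⟩)

/-- Builds the final open set from a saturated open set in the hyperspace. -/
lemma build_V (p : X) (U : Set (HS p)) (V' : Set (Hyp X)) (hV'open : IsOpen V')
    (hsat : ∀ A B : Hyp X, A ∈ V' → A ∈ CpSet p → B ∈ CpSet p → B ∈ V')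
    (hsubU : V' ⊆ hsMk p ⁻¹' U) (A : Hyp X) (hA : A ∈ V')
    (hconn : IsConnected (V'ᶜ : Set (Hyp X))) :
    ∃ V : Set (HS p), IsOpen V ∧ hsMk p A ∈ V ∧ V ⊆ U ∧ IsConnected (Vᶜ : Set (HS p)) := by
  refine ⟨hsMk p '' V', ?_, ⟨A, hA, rfl⟩, ?_, ?_⟩
  · rw [isOpen_hsMk_iff]
    have : hsMk p ⁻¹' (hsMk p '' V') = V' := by
      apply Set.Subset.antisymm
      · intro B hB
        obtain ⟨C, hC, hCB⟩ := hB
        rcases hsMk_rel hCB with rfl | ⟨h1, h2⟩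
        · exact hC
        · exact hsat C B hC h1 h2
      · exact Set.subset_preimage_image _ _
    rw [this]
    exact hV'open
  · rintro _ ⟨C, hC, rfl⟩
    exact hsubU hC
  · have himg : (hsMk p '' V')ᶜ = hsMk p '' V'ᶜ := by
      apply Set.Subset.antisymm
      · intro z hz
        obtain ⟨B, rfl⟩ := hsMk_surj p z
        refine ⟨B, fun hB => hz ⟨B, hB, rfl⟩, rfl⟩
      · rintro _ ⟨B, hB, rfl⟩ ⟨C, hC, hCB⟩
        rcases hsMk_rel hCB with rfl | ⟨h1, h2⟩
        · exact hB hC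
        · exact hB (hsat C B hC h1 h2)
    rw [himg]
    exact hconn.image (hsMk p) (continuous_hsMk p).continuousOn

end QuotientGlue

section Main
open Metric
variable {X : Type*} [MetricSpace X] [CompactSpace X]

lemma glue_hub {α : Type*} [TopologicalSpace α] {s : Set α} {hub : α} (hhub : hub ∈ s)
    (H : ∀ B ∈ s, ∃ t, t ⊆ s ∧ B ∈ t ∧ hub ∈ t ∧ IsPreconnected t) : IsConnected s := by
  refine ⟨⟨hub, hhub⟩, isPreconnected_of_forall_pair fun x hx y hy => ?_⟩
  obtain ⟨t1, h1s, hxt1, hht1, h1c⟩ := H x hx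
  obtain ⟨t2, h2s, hyt2, hht2, h2c⟩ := H y hy
  exact ⟨t1 ∪ t2, Set.union_subset h1s h2s, Or.inl hxt1, Or.inr hyt2,
    IsPreconnected.union hub hht1 hht2 h1c h2c⟩

lemma singHyp_coe (x : X) : ((singHyp x).1 : Set X) = {x} := rfl

lemma continuous_singHyp : Continuous (fun x : X => singHyp x) := by
  rw [Metric.continuous_iff]
  intro x ε hε
  refine ⟨ε, hε, fun y hy => ?_⟩
  have hle : dist (singHyp y) (singHyp x) ≤ dist y x := by
    rw [hyp_dist_eq, singHyp_coe, singHyp_coe]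
    refine hausdorffDist_le_of_mem_dist dist_nonneg ?_ ?_
    · intro z hz
      rw [Set.mem_singleton_iff] at hz
      subst hz
      exact ⟨x, rfl, le_refl _⟩
    · intro z hz
      rw [Set.mem_singleton_iff] at hz
      subst hz
      exact ⟨y, rfl, by rw [dist_comm]⟩
  exact lt_of_le_of_lt hle hy

theorem stmt18' [ConnectedSpace X] [Nontrivial X] (p : X)
    (h : ∀ U : Set X, IsOpen U → p ∈ U →
      ∃ V : Set X, IsOpen V ∧ p ∈ V ∧ V ⊆ U ∧ IsConnected (Vᶜ : Set X)) :
    ∀ z : HS p, ∀ U : Set (HS p), IsOpen U → z ∈ U →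
      ∃ V : Set (HS p), IsOpen V ∧ z ∈ V ∧ V ⊆ U ∧ IsConnected (Vᶜ : Set (HS p)) := by
  intro z U hU hzU
  obtain ⟨A, rfl⟩ := hsMk_surj p z
  set O : Set (Hyp X) := hsMk p ⁻¹' U with hO
  have hOopen : IsOpen O := hU.preimage (continuous_hsMk p)
  have hAO : A ∈ O := hzU
  set XT : Hyp X := ⟨⟨⟨Set.univ, isCompact_univ⟩, Set.univ_nonempty⟩, isConnected_univ⟩
    with hXT
  have hXT1 : (XT.1 : Set X) = Set.univ := rfl
  by_cases hAp : p ∈ (A.1 : Set X)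
  · -- case z = C_p
    have hCpO : ∀ B : Hyp X, B ∈ CpSet p → B ∈ O := by
      intro B hB
      show hsMk p B ∈ U
      rw [hsMk_eq_of_mem hB hAp]
      exact hzU
    -- find ρ > 0 such that any subcontinuum meeting ball p ρ is in O
    have hf : Continuous (fun B : Hyp X => infDist p (B.1 : Set X)) := by
      rw [Metric.continuous_iff]
      intro B ε hε
      refine ⟨ε, hε, fun B' hB' => ?_⟩
      rw [hyp_dist_eq] at hB'
      rw [Real.dist_eq, abs_sub_lt_iff]
      have h1 := infDist_le_infDist_add_hausdorffDist
        (x := p) (s := (B'.1 : Set X)) (t := (B.1 : Set X)) (hedist_ne_top B'.1 B.1)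
      have h2 := infDist_le_infDist_add_hausdorffDist
        (x := p) (s := (B.1 : Set X)) (t := (B'.1 : Set X)) (hedist_ne_top B.1 B'.1)
      rw [hausdorffDist_comm] at h2
      constructor <;> linarith
    have hρ : ∃ ρ > 0, ∀ B : Hyp X, (∃ x ∈ (B.1 : Set X), dist x p < ρ) → B ∈ O := by
      by_cases hOcne : (Oᶜ : Set (Hyp X)).Nonempty
      · have hOc : IsCompact (Oᶜ : Set (Hyp X)) := hOopen.isClosed_compl.isCompact
        obtain ⟨B₀, hB₀, hmin⟩ := hOc.exists_isMinOn hOcne hf.continuousOn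
        have hρpos : 0 < infDist p (B₀.1 : Set X) := by
          refine (B₀.1.isCompact.isClosed.notMem_iff_infDist_pos B₀.1.nonempty).1 ?_
          intro hpB₀
          exact hB₀ (hCpO B₀ hpB₀)
        refine ⟨infDist p (B₀.1 : Set X), hρpos, fun B ⟨x, hxB, hxp⟩ => ?_⟩
        by_contra hBO
        have h1 : infDist p (B₀.1 : Set X) ≤ infDist p (B.1 : Set X) := hmin hBO
        have h2 : infDist p (B.1 : Set X) ≤ dist p x := infDist_le_dist_of_mem hxB
        rw [dist_comm] at hxp
        linarith
      · rw [Set.not_nonempty_iff_eq_empty] at hOcne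
        refine ⟨1, one_pos, fun B _ => ?_⟩
        by_contra hBO
        have : B ∈ (Oᶜ : Set (Hyp X)) := hBO
        rw [hOcne] at this
        exact this
    obtain ⟨ρ, ρpos, hρ⟩ := hρ
    obtain ⟨Wp, hWpopen, hpWp, hWpsub, hYconn⟩ :=
      h (Metric.ball p ρ) Metric.isOpen_ball (Metric.mem_ball_self ρpos)
    have hYcomp : IsCompact (Wpᶜ : Set X) := hWpopen.isClosed_compl.isCompact
    set Yh : Hyp X := ⟨⟨⟨Wpᶜ, hYcomp⟩, hYconn.1⟩, hYconn⟩ with hYh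
    have hYh1 : (Yh.1 : Set X) = Wpᶜ := rfl
    set V' : Set (Hyp X) := {B | ((B.1 : Set X) ∩ Wp).Nonempty} with hV'
    have hcompl : ∀ B : Hyp X, B ∈ V'ᶜ ↔ (B.1 : Set X) ⊆ Wpᶜ := by
      intro B
      constructor
      · intro hB x hx
        intro hxW
        exact hB ⟨x, hx, hxW⟩
      · rintro hsubc ⟨x, hx1, hx2⟩
        exact hsubc hx1 hx2
    refine build_V p U V' ?_ ?_ ?_ A ⟨p, hAp, hpWp⟩ ?_
    · have : V' = Subtype.val ⁻¹' {K : NonemptyCompacts X | ((K : Set X) ∩ Wp).Nonempty} := rfl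
      rw [this]
      exact (isOpen_hit Wp hWpopen).preimage continuous_subtype_val
    · intro A' B' _ _ hB'
      exact ⟨p, hB', hpWp⟩
    · rintro B ⟨x, hxB, hxW⟩
      refine hρ B ⟨x, hxB, ?_⟩
      have := hWpsub hxW
      rwa [Metric.mem_ball] at this
    · -- complement is C(Y), connected via chains to Yh
      refine glue_hub (hub := Yh) ((hcompl Yh).2 subset_rfl) ?_
      intro B hB
      obtain ⟨S, hSconn, hBS, hYS, hSmem⟩ :=
        exists_connected_chain B Yh ((hcompl B).1 hB)
      refine ⟨S, ?_, hBS, hYS, hSconn.2⟩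
      intro C hC
      exact (hcompl C).2 (hSmem C hC).2
  · -- case z ≠ C_p : p ∉ A
    have hdp : 0 < infDist p (A.1 : Set X) :=
      (A.1.isCompact.isClosed.notMem_iff_infDist_pos A.1.nonempty).1 hAp
    set dp := infDist p (A.1 : Set X) with hdpdef
    obtain ⟨ε₀, ε₀pos, hball⟩ := Metric.isOpen_iff.1 hOopen A hAO
    -- hub chain from {p} to the whole space
    obtain ⟨Sp, hSpconn, hSp1, hSp2, hSp3⟩ :=
      exists_connected_chain (singHyp p) XT (Set.subset_univ _)
    have hSpp : ∀ C ∈ Sp, p ∈ (C.1 : Set X) := by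
      intro C hC
      exact (hSp3 C hC).1 (Set.mem_singleton p)
    by_cases hnd : ∃ a ∈ (A.1 : Set X), ∃ b ∈ (A.1 : Set X), a ≠ b
    · -- nondegenerate A
      obtain ⟨a, ha, b, hb, hab⟩ := hnd
      set d0 := dist a b with hd0def
      have d0pos : 0 < d0 := dist_pos.2 hab
      set ε := min ε₀ (min dp (d0/4)) / 2 with hεdef
      have εpos : 0 < ε := by
        apply div_pos _ two_pos
        exact lt_min ε₀pos (lt_min hdp (by linarith))
      have hεε₀ : ε < ε₀ := by
        have : min ε₀ (min dp (d0/4)) ≤ ε₀ := min_le_left _ _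
        rw [hεdef]; linarith
      have hεdp : ε < dp := by
        have h1 : min ε₀ (min dp (d0/4)) ≤ dp := le_trans (min_le_right _ _) (min_le_left _ _)
        rw [hεdef]; linarith
      have hεd0 : 2 * ε ≤ d0 / 2 := by
        have h1 : min ε₀ (min dp (d0/4)) ≤ d0/4 := le_trans (min_le_right _ _) (min_le_right _ _)
        rw [hεdef]; linarith
      set W : Set X := {x | infDist x (A.1 : Set X) < ε/2} with hW
      have hWopen : IsOpen W := isOpen_lt (continuous_infDist_pt _) continuous_const
      have hpW : p ∉ W := by
        intro hp
        rw [hW, Set.mem_setOf_eq, ← hdpdef] at hp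
        linarith
      set V' : Set (Hyp X) := {B | dist B A < ε ∧ (B.1 : Set X) ⊆ W} with hV'
      -- singletons are never in V'
      have hsingV : ∀ x : X, singHyp x ∈ V'ᶜ := by
        intro x
        intro hmem
        obtain ⟨h1, -⟩ := hmem
        have hAx : ∃ c ∈ (A.1 : Set X), d0/2 ≤ dist c x := by
          by_contra hcon
          push_neg at hcon
          have h1 := hcon a ha
          have h2 := hcon b hb
          have htr : d0 ≤ dist a x + dist x b := dist_triangle a x b
          rw [dist_comm x b] at htr
          linarith
        obtain ⟨c, hc, hcx⟩ := hAx
        have h2 : infDist c ({x} : Set X) ≤ hausdorffDist (A.1 : Set X) ({x} : Set X) :=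
          infDist_le_hausdorffDist_of_mem hc (by
            rw [← singHyp_coe]
            exact hedist_ne_top A.1 (singHyp x).1)
        rw [infDist_singleton] at h2
        rw [hyp_dist_eq, singHyp_coe, hausdorffDist_comm] at h1
        linarith
      have hXTV : XT ∈ V'ᶜ := by
        intro hmem
        exact hpW (hmem.2 (Set.mem_univ p))
      -- the hub structure: F₁ ∪ Sp
      set F₁ : Set (Hyp X) := Set.range (fun x : X => singHyp x) with hF₁
      have hF₁conn : IsPreconnected F₁ := by
        rw [hF₁, ← Set.image_univ]
        exact isPreconnected_univ.image _ continuous_singHyp.continuousOn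
      have hSpV : ∀ C ∈ Sp, C ∈ V'ᶜ := by
        intro C hC hmem
        exact hpW (hmem.2 (hSpp C hC))
      set Hub : Set (Hyp X) := F₁ ∪ Sp with hHub
      have hHubconn : IsPreconnected Hub :=
        IsPreconnected.union (singHyp p) ⟨p, rfl⟩ hSp1 hF₁conn hSpconn.2
      have hHubV : Hub ⊆ V'ᶜ := by
        rintro C (⟨x, rfl⟩ | hC)
        · exact hsingV x
        · exact hSpV C hC
      have hXTHub : XT ∈ Hub := Or.inr hSp2
      refine build_V p U V' ?_ ?_ ?_ A ?_ ?_
      · have : V' = Metric.ball A ε ∩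
            (Subtype.val ⁻¹' {K : NonemptyCompacts X | (K : Set X) ⊆ W}) := by
          ext B
          rw [hV']
          exact Iff.rfl
        rw [this]
        exact isOpen_ball.inter ((isOpen_below W hWopen).preimage continuous_subtype_val)
      · intro A' B' hA' hA'Cp _
        exact absurd (hA'.2 hA'Cp) hpW
      · intro B hB
        exact hball (Metric.mem_ball.2 (lt_trans hB.1 hεε₀))
      · refine ⟨by rw [dist_self]; exact εpos, ?_⟩
        intro x hx
        rw [hW, Set.mem_setOf_eq, infDist_zero_of_mem hx]
        linarith
      · -- complement connected
        refine glue_hub (hub := XT) hXTV ?_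
        intro B hB
        by_cases hBW : (B.1 : Set X) ⊆ W
        · -- B inside W but far from A in Hausdorff distance
          have hBd : ε ≤ dist B A := by
            by_contra hlt
            push_neg at hlt
            exact hB ⟨hlt, hBW⟩
          -- find a* ∈ A far from B
          obtain ⟨astar, hastar, hmax⟩ := A.1.isCompact.exists_isMaxOn A.1.nonempty
            (continuous_infDist_pt (B.1 : Set X)).continuousOn
          have hstar : ε ≤ infDist astar (B.1 : Set X) := by
            by_contra hlt
            push_neg at hlt
            have hH : hausdorffDist (B.1 : Set X) (A.1 : Set X)
                ≤ max (infDist astar (B.1 : Set X)) (ε/2) := by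
              refine hausdorffDist_le_of_infDist
                (le_trans (by linarith) (le_max_right _ _)) ?_ ?_
              · intro x hx
                have := hBW hx
                rw [hW, Set.mem_setOf_eq] at this
                exact le_trans (le_of_lt this) (le_max_right _ _)
              · intro y hy
                exact le_trans (hmax hy) (le_max_left _ _)
            rw [← hyp_dist_eq] at hH
            have : max (infDist astar (B.1 : Set X)) (ε/2) < ε :=
              max_lt hlt (by linarith)
            linarith
          obtain ⟨x₀, hx₀⟩ := B.1.nonempty
          obtain ⟨Sd, hSdconn, hSd1, hSd2, hSd3⟩ :=
            exists_connected_chain (singHyp x₀) B (Set.singleton_subset_iff.2 hx₀)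
          have hSdV : ∀ C ∈ Sd, C ∈ V'ᶜ := by
            intro C hC hmem
            have hCB : (C.1 : Set X) ⊆ (B.1 : Set X) := (hSd3 C hC).2
            have h1 : infDist astar (B.1 : Set X) ≤ infDist astar (C.1 : Set X) :=
              infDist_le_infDist_of_subset hCB C.1.nonempty
            have h2 : infDist astar (C.1 : Set X) ≤
                hausdorffDist (A.1 : Set X) (C.1 : Set X) :=
              infDist_le_hausdorffDist_of_mem hastar (hedist_ne_top A.1 C.1)
            have h3 : dist C A < ε := hmem.1
            rw [hyp_dist_eq, hausdorffDist_comm] at h3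
            linarith
          exact ⟨Sd ∪ Hub, Set.union_subset (fun C hC => hSdV C hC) hHubV,
            Or.inl hSd2, Or.inr hXTHub,
            IsPreconnected.union (singHyp x₀) hSd1 (Or.inl ⟨x₀, rfl⟩) hSdconn.2 hHubconn⟩
        · -- B not inside W : connect up to XT
          obtain ⟨S, hSconn, hBS, hXTS, hSmem⟩ :=
            exists_connected_chain B XT (Set.subset_univ _)
          refine ⟨S, ?_, hBS, hXTS, hSconn.2⟩
          intro C hC hmem
          exact hBW (Set.Subset.trans (hSmem C hC).1 hmem.2)
    · -- degenerate A = {a}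
      push_neg at hnd
      obtain ⟨a, ha⟩ := A.1.nonempty
      have hAa : (A.1 : Set X) = {a} := by
        apply Set.Subset.antisymm
        · intro x hx
          rw [Set.mem_singleton_iff]
          exact hnd x hx a ha
        · exact Set.singleton_subset_iff.2 ha
      set r := min (ε₀/2) (dp/2) with hrdef
      have rpos : 0 < r := lt_min (by linarith) (by linarith)
      set W : Set X := Metric.ball a r with hW
      have hpW : p ∉ W := by
        intro hp
        rw [hW, Metric.mem_ball] at hp
        have h1 : dp ≤ dist p a := by
          rw [hdpdef]
          exact infDist_le_dist_of_mem (by rw [hAa]; rfl)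
        have h2 : r ≤ dp/2 := min_le_right _ _
        linarith
      set V' : Set (Hyp X) := {B | (B.1 : Set X) ⊆ W} with hV'
      have hXTV : XT ∈ V'ᶜ := by
        intro hmem
        exact hpW (hmem (Set.mem_univ p))
      refine build_V p U V' ?_ ?_ ?_ A ?_ ?_
      · have : V' = Subtype.val ⁻¹' {K : NonemptyCompacts X | (K : Set X) ⊆ W} := rfl
        rw [this]
        exact (isOpen_below W (by rw [hW]; exact Metric.isOpen_ball)).preimage continuous_subtype_val
      · intro A' B' hA' hA'Cp _
        exact absurd (hA' hA'Cp) hpW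
      · intro B hB
        refine hball (Metric.mem_ball.2 ?_)
        have hH : hausdorffDist (B.1 : Set X) (A.1 : Set X) ≤ r := by
          rw [hAa]
          refine hausdorffDist_le_of_mem_dist (le_of_lt rpos) ?_ ?_
          · intro x hx
            refine ⟨a, rfl, ?_⟩
            have := hB hx
            rw [hW, Metric.mem_ball] at this
            exact le_of_lt this
          · intro x hx
            rw [Set.mem_singleton_iff] at hx
            subst hx
            obtain ⟨y, hy⟩ := B.1.nonempty
            refine ⟨y, hy, ?_⟩
            have := hB hy
            rw [hW, Metric.mem_ball] at this
            rw [dist_comm]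
            exact le_of_lt this
        rw [hyp_dist_eq]
        have : r < ε₀ := lt_of_le_of_lt (min_le_left _ _) (by linarith)
        linarith
      · show (A.1 : Set X) ⊆ W
        rw [hAa, hW]
        exact Set.singleton_subset_iff.2 (Metric.mem_ball_self rpos)
      · refine glue_hub (hub := XT) hXTV ?_
        intro B hB
        obtain ⟨S, hSconn, hBS, hXTS, hSmem⟩ :=
          exists_connected_chain B XT (Set.subset_univ _)
        refine ⟨S, ?_, hBS, hXTS, hSconn.2⟩
        intro C hC hmem
        exact hB (Set.Subset.trans (hSmem C hC).1 hmem)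

end Main

theorem stmt18 [CompactSpace X] [ConnectedSpace X] [Nontrivial X] (p : X)
    (h : ∀ U : Set X, IsOpen U → p ∈ U →
      ∃ V : Set X, IsOpen V ∧ p ∈ V ∧ V ⊆ U ∧ IsConnected (Vᶜ : Set X)) :
    ∀ z : HS p, ∀ U : Set (HS p), IsOpen U → z ∈ U →
      ∃ V : Set (HS p), IsOpen V ∧ z ∈ V ∧ V ⊆ U ∧ IsConnected (Vᶜ : Set (HS p)) :=
  stmt18' p h
end

section
/- Let Y be a unicoherent, aposyndetic continuum that is colocally connected. Then Y is finitely aposyndetic: for every finite set F ⊆ Y and every y ∈ Y \ F, there is a subcontinuum W of Y with y ∈ int(W) ⊆ W ⊆ Y \ F. -/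
open TopologicalSpace Set

variable {X : Type*} [MetricSpace X]

/-- Intersection of complements of pairwise disjoint open sets with connected complements
is connected, in a unicoherent continuum. -/
lemma biInter_compl_connected {Y : Type*} [MetricSpace Y] [CompactSpace Y] [ConnectedSpace Y]
    (huni : ∀ A B : Set Y, IsClosed A → IsClosed B → IsConnected A → IsConnected B →
      A ∪ B = Set.univ → IsConnected (A ∩ B))
    (V : Y → Set Y) (s : Finset Y)
    (hop : ∀ x ∈ s, IsOpen (V x))
    (hcon : ∀ x ∈ s, IsConnected (V x)ᶜ)
    (hdisj : (s : Set Y).Pairwise fun a b => Disjoint (V a) (V b)) :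
    IsConnected (⋂ x ∈ s, (V x)ᶜ) := by
  classical
  induction s using Finset.induction_on with
  | empty => simpa using isConnected_univ
  | @insert a s ha ih =>
    have hA : IsConnected (⋂ x ∈ s, (V x)ᶜ) := by
      refine ih (fun x hx => hop x (Finset.mem_insert_of_mem hx))
        (fun x hx => hcon x (Finset.mem_insert_of_mem hx)) ?_
      exact hdisj.mono (fun x hx => Finset.mem_coe.2 (Finset.mem_insert_of_mem (Finset.mem_coe.1 hx)))
    have hAcl : IsClosed (⋂ x ∈ s, (V x)ᶜ) :=
      isClosed_biInter fun x hx => (hop x (Finset.mem_insert_of_mem hx)).isClosed_compl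
    have hBcl : IsClosed (V a)ᶜ := (hop a (Finset.mem_insert_self a s)).isClosed_compl
    have hBcon : IsConnected (V a)ᶜ := hcon a (Finset.mem_insert_self a s)
    have hcover : (⋂ x ∈ s, (V x)ᶜ) ∪ (V a)ᶜ = Set.univ := by
      apply Set.eq_univ_of_forall
      intro z
      by_cases hz : z ∈ ⋂ x ∈ s, (V x)ᶜ
      · exact Or.inl hz
      · simp only [Set.mem_iInter, Set.mem_compl_iff, not_forall, not_not] at hz
        obtain ⟨x, hx, hzx⟩ := hz
        refine Or.inr fun hza => ?_
        have hax : a ≠ x := fun h => ha (h ▸ hx)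
        exact (hdisj (Finset.mem_insert_self a s) (Finset.mem_insert_of_mem hx)
          hax).le_bot ⟨hza, hzx⟩
    have := huni _ _ hAcl hBcl hA hBcon hcover
    rw [Finset.set_biInter_insert, Set.inter_comm]
    exact this

theorem stmt19 {Y : Type*} [MetricSpace Y] [CompactSpace Y] [ConnectedSpace Y] [Nontrivial Y]
    (huni : ∀ A B : Set Y, IsClosed A → IsClosed B → IsConnected A → IsConnected B →
      A ∪ B = Set.univ → IsConnected (A ∩ B))
    (hapo : ∀ x y : Y, x ≠ y →
      ∃ M : Set Y, IsCompact M ∧ IsConnected M ∧ x ∈ interior M ∧ y ∉ M)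
    (hcoloc : ∀ y : Y, ∀ U : Set Y, IsOpen U → y ∈ U →
      ∃ V : Set Y, IsOpen V ∧ y ∈ V ∧ V ⊆ U ∧ IsConnected (Vᶜ : Set Y)) :
    ∀ F : Set Y, F.Finite → ∀ y ∉ F,
      ∃ W : Set Y, IsCompact W ∧ IsConnected W ∧ y ∈ interior W ∧ W ⊆ Fᶜ := by
  classical
  intro F hF y hy
  set s : Finset Y := hF.toFinset with hs
  have hymem : ∀ x ∈ s, x ≠ y := by
    intro x hx
    rw [hs, Set.Finite.mem_toFinset] at hx
    exact fun h => hy (h ▸ hx)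
  -- ε-separation: for each x in s, a positive radius
  set T : Finset Y := insert y s with hT
  have hεpos : ∀ x ∈ s, ∃ ε > 0, (∀ z ∈ T.erase x, ε ≤ dist x z / 3) := by
    intro x hx
    have hne : (T.erase x).Nonempty := by
      refine ⟨y, Finset.mem_erase.2 ⟨(hymem x hx).symm, Finset.mem_insert_self _ _⟩⟩
    refine ⟨(T.erase x).inf' hne (fun z => dist x z / 3), ?_, ?_⟩
    · rw [gt_iff_lt, Finset.lt_inf'_iff]
      intro z hz
      have : x ≠ z := fun h => (Finset.mem_erase.1 hz).1 h.symm
      have := dist_pos.2 this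
      linarith
    · intro z hz
      exact Finset.inf'_le _ hz
  choose! ε hεpos' hεle using hεpos
  -- colocal connectedness inside each ball
  have hV : ∀ x ∈ s, ∃ V : Set Y, IsOpen V ∧ x ∈ V ∧ V ⊆ Metric.ball x (ε x) ∧
      IsConnected (Vᶜ : Set Y) := by
    intro x hx
    exact hcoloc x _ Metric.isOpen_ball (Metric.mem_ball_self (hεpos' x hx))
  choose! V hVop hVmem hVsub hVcon using hV
  -- key distance facts
  have hdistT : ∀ x ∈ s, ∀ z ∈ T, z ≠ x → ∀ w ∈ V x, dist z w ≥ 2 * dist x z / 3 := by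
    intro x hx z hz hzx w hw
    have hzT : z ∈ T.erase x := Finset.mem_erase.2 ⟨hzx, hz⟩
    have h1 : dist x w < ε x := Metric.mem_ball'.1 (hVsub x hx hw)
    have h2 : ε x ≤ dist x z / 3 := hεle x hx z hzT
    have h4 := dist_triangle x w z
    have h5 : dist z w = dist w z := dist_comm z w
    linarith
  -- pairwise disjoint
  have hdisj : (s : Set Y).Pairwise fun a b => Disjoint (V a) (V b) := by
    intro a hamem b hbmem hab
    rw [Finset.mem_coe] at hamem hbmem
    rw [Set.disjoint_left]
    intro w hwa hwb
    have haT : a ∈ T := Finset.mem_insert_of_mem hamem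
    have hbT : b ∈ T := Finset.mem_insert_of_mem hbmem
    have h1 := hdistT a hamem b hbT (Ne.symm hab) w hwa
    have h2 : dist b w < ε b := Metric.mem_ball'.1 (hVsub b hbmem hwb)
    have h3 : ε b ≤ dist b a / 3 := hεle b hbmem a (Finset.mem_erase.2 ⟨hab, haT⟩)
    have h4 : dist a b = dist b a := dist_comm a b
    have hpos := dist_pos.2 hab
    linarith
  -- y is far from each V x
  have hyfar : ∀ x ∈ s, ∀ w ∈ V x, dist y w ≥ 2 * dist x y / 3 := by
    intro x hx w hw
    exact hdistT x hx y (Finset.mem_insert_self _ _) (hymem x hx).symm w hw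
  set W : Set Y := ⋂ x ∈ s, (V x)ᶜ with hW
  have hWcl : IsClosed W := isClosed_biInter fun x hx => (hVop x hx).isClosed_compl
  refine ⟨W, hWcl.isCompact, ?_, ?_, ?_⟩
  · exact biInter_compl_connected huni V s hVop hVcon hdisj
  · -- y in interior: the open set ⋂ x ∈ s, (closure (V x))ᶜ works
    have hO : IsOpen (⋂ x ∈ s, (closure (V x))ᶜ) :=
      Set.Finite.isOpen_biInter s.finite_toSet fun x _ => isClosed_closure.isOpen_compl
    have hyO : y ∈ ⋂ x ∈ s, (closure (V x))ᶜ := by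
      simp only [Set.mem_iInter, Set.mem_compl_iff]
      intro x hx hyc
      have hpos := dist_pos.2 (hymem x hx).symm
      rw [dist_comm] at hpos
      obtain ⟨w, hw, hdw⟩ := Metric.mem_closure_iff.1 hyc (dist x y / 3) (by linarith)
      have := hyfar x hx w hw
      linarith
    have hsub : (⋂ x ∈ s, (closure (V x))ᶜ) ⊆ W := by
      refine Set.iInter₂_mono fun x hx => ?_
      exact Set.compl_subset_compl.2 subset_closure
    exact interior_maximal hsub hO hyO
  · intro z hz hzF
    have hzs : z ∈ s := by rw [hs, Set.Finite.mem_toFinset]; exact hzF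
    have := Set.mem_iInter₂.1 hz z hzs
    exact this (hVmem z hzs)
end
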